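/- Let u* ∈ U with support S := {(c,a) : u*(c,a) > 0}, and suppose u* maximizes J over the face {u ∈ U : u(c,a) = 0 for all (c,a) ∉ S}. For a block (c,a) with c = (c₁,…,c_r) write σ(c,a) := (c₂,…,c_r,a) ∈ A^r for its length-r suffix. Then there exist multipliers λ₁,…,λ_m ∈ ℝ, a scalar γ ∈ ℝ, and a function ψ : A^r → ℝ such that for every (c,a) ∈ S: log( u*(c,a) / η_{u*}(c) ) = −γ − ∑_{j=1}^m λ_j·G_j(c,a) − ψ(c) + ψ(σ(c,a)). -/

import Mathlib

open Finset

/-- Context marginal of a block law on `A^(n+1) × A` (contexts are `Fin (n+1) → A`,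
so the memory length is `r = n+1 ≥ 1`). -/
noncomputable def eta {A : Type*} [Fintype A] {n : ℕ}
    (u : (Fin (n + 1) → A) → A → ℝ) (c : Fin (n + 1) → A) : ℝ :=
  ∑ a, u c a

/-- Entropy-rate functional.  In Lean, `Real.log 0 = 0` and `0 * x = 0`, so the
conventions `0·log 0 = 0` and "terms with `u(c,a) = 0` contribute `0`" hold
automatically. -/
noncomputable def J {A : Type*} [Fintype A] {n : ℕ}
    (u : (Fin (n + 1) → A) → A → ℝ) : ℝ :=
  -∑ c, ∑ a, u c a * Real.log (u c a / eta u c)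

/-- A block law: nonnegative entries with total mass one. -/
def IsBlockLaw {A : Type*} [Fintype A] {n : ℕ}
    (u : (Fin (n + 1) → A) → A → ℝ) : Prop :=
  (∀ c a, 0 ≤ u c a) ∧ ∑ c, ∑ a, u c a = 1

/-- The context `(α, d₁, …, d_{r-1})` obtained from `d = (d₁, …, d_r)` by
prepending `α` and dropping the last entry. -/
def shiftCtx {A : Type*} {n : ℕ} (α : A) (d : Fin (n + 1) → A) : Fin (n + 1) → A :=
  Fin.cons α (fun i : Fin n => d i.castSucc)

/-- Stationary consistency:
`∑_α u((α,d₁,…,d_{r-1}), d_r) = ∑_β u(d, β)` for every block `d`. -/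
def StationaryConsistent {A : Type*} [Fintype A] {n : ℕ}
    (u : (Fin (n + 1) → A) → A → ℝ) : Prop :=
  ∀ d : Fin (n + 1) → A,
    ∑ α : A, u (shiftCtx α d) (d (Fin.last n)) = ∑ β : A, u d β

/-- The feasible class determined by features `G` and targets `b`. -/
def Feasible {A : Type*} [Fintype A] {n m : ℕ}
    (G : Fin m → (Fin (n + 1) → A) → A → ℝ) (b : Fin m → ℝ)
    (u : (Fin (n + 1) → A) → A → ℝ) : Prop :=
  IsBlockLaw u ∧ StationaryConsistent u ∧
    ∀ j, ∑ c, ∑ a, u c a * G j c a = b j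

/-! ### Auxiliary machinery for stmt10 -/

section Aux
variable {C A : Type*} [Fintype C] [Fintype A]

/-- Generic linear functional from a coefficient table. -/
noncomputable def lfun (w : C → A → ℝ) : (C → A → ℝ) →ₗ[ℝ] ℝ where
  toFun v := ∑ c, ∑ a, w c a * v c a
  map_add' x y := by
    simp [mul_add, Finset.sum_add_distrib]
  map_smul' r x := by
    simp [Finset.mul_sum, mul_left_comm]

lemma lfun_apply (w v : C → A → ℝ) : lfun w v = ∑ c, ∑ a, w c a * v c a := rfl

lemma lfun_delta [DecidableEq C] [DecidableEq A] (w : C → A → ℝ) (c₀ : C) (a₀ : A) :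
    lfun w (fun c a => if c = c₀ then if a = a₀ then (1:ℝ) else 0 else 0) = w c₀ a₀ := by
  rw [lfun_apply]
  rw [Finset.sum_eq_single c₀]
  · rw [Finset.sum_eq_single a₀]
    · simp
    · intro a _ ha; simp [ha]
    · simp
  · intro c _ hc; simp [hc]
  · simp

lemma lfun_delta_left [DecidableEq C] [DecidableEq A] (v : C → A → ℝ) (c₀ : C) (a₀ : A) :
    lfun (fun c a => if c = c₀ then if a = a₀ then (1:ℝ) else 0 else 0) v = v c₀ a₀ := by
  rw [lfun_apply]
  rw [Finset.sum_eq_single c₀]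
  · rw [Finset.sum_eq_single a₀]
    · simp
    · intro a _ ha; simp [ha]
    · simp
  · intro c _ hc; simp [hc]
  · simp

lemma sum_ite_ctx [DecidableEq C] (v : C → A → ℝ) (d : C) :
    ∑ c, ∑ a, (if c = d then (1:ℝ) else 0) * v c a = ∑ a, v d a := by
  rw [Finset.sum_eq_single d]
  · simp
  · intro c _ hc; simp [hc]
  · simp

end Aux

/-- Core scalar derivative computation. -/
lemma hasDeriv_term (u v e w : ℝ) (hu : 0 < u) (he : 0 < e) :
    HasDerivAt (fun t : ℝ => (u + t * v) * Real.log ((u + t * v) / (e + t * w)))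
      (v * Real.log (u / e) + v - u * w / e) 0 := by
  have h1 : HasDerivAt (fun t : ℝ => u + t * v) v 0 := by
    simpa using ((hasDerivAt_id (0:ℝ)).mul_const v).const_add u
  have h2 : HasDerivAt (fun t : ℝ => e + t * w) w 0 := by
    simpa using ((hasDerivAt_id (0:ℝ)).mul_const w).const_add e
  have hq : HasDerivAt (fun t : ℝ => (u + t * v) / (e + t * w))
      ((v * e - u * w) / e ^ 2) 0 := by
    simpa using h1.fun_div h2 (by simpa using he.ne')
  have hne : (fun t : ℝ => (u + t * v) / (e + t * w)) 0 ≠ 0 := by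
    simp only [zero_mul, add_zero]
    positivity
  have hlog := hq.log hne
  have := h1.fun_mul hlog
  simp only [zero_mul, add_zero] at this hlog
  refine this.congr_deriv ?_
  field_simp
  ring

lemma sigma_shiftCtx {A : Type*} {n : ℕ} (α : A) (d : Fin (n + 1) → A) :
    Fin.snoc (Fin.tail (shiftCtx α d)) (d (Fin.last n)) = d := by
  funext i
  refine Fin.lastCases ?_ ?_ i
  · simp
  · intro j
    simp [Fin.snoc_castSucc, Fin.tail, shiftCtx]

lemma stat_sum {A : Type*} [Fintype A] {n : ℕ} [DecidableEq (Fin (n+1) → A)]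
    (v : (Fin (n + 1) → A) → A → ℝ) (d : Fin (n + 1) → A) :
    ∑ c, ∑ a, (if Fin.snoc (Fin.tail c) a = d then (1:ℝ) else 0) * v c a
      = ∑ α : A, v (shiftCtx α d) (d (Fin.last n)) := by
  classical
  have : ∀ c : Fin (n+1) → A, ∀ a : A,
      (if Fin.snoc (Fin.tail c) a = d then (1:ℝ) else 0) * v c a
      = if Fin.snoc (Fin.tail c) a = d then v c a else 0 := by
    intro c a; split <;> simp
  simp_rw [this]
  have hprod := Fintype.sum_prod_type
    (f := fun p : ((Fin (n+1) → A) × A) => if Fin.snoc (Fin.tail p.1) p.2 = d then v p.1 p.2 else 0)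
  simp only at hprod
  rw [← hprod]
  rw [← Finset.sum_filter]
  refine Finset.sum_nbij' (fun p => p.1 0) (fun α => (shiftCtx α d, d (Fin.last n)))
    ?_ ?_ ?_ ?_ ?_
  · intro p _; exact Finset.mem_univ _
  · intro α _
    simp only [Finset.mem_filter, Finset.mem_univ, true_and]
    exact sigma_shiftCtx α d
  · intro p hp
    simp only [Finset.mem_filter, Finset.mem_univ, true_and] at hp
    have h2 : d (Fin.last n) = p.2 := by rw [← hp]; simp
    have h1 : shiftCtx (p.1 0) d = p.1 := by
      rw [← hp]
      funext i
      unfold shiftCtx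
      refine Fin.cases ?_ ?_ i
      · simp
      · intro j
        simp [Fin.snoc_castSucc, Fin.tail]
    show (shiftCtx (p.1 0) d, d (Fin.last n)) = p
    rw [h1, h2]
  · intro α _
    simp [shiftCtx]
  · intro p hp
    simp only [Finset.mem_filter, Finset.mem_univ, true_and] at hp
    have h2 : d (Fin.last n) = p.2 := by rw [← hp]; simp
    have h1 : shiftCtx (p.1 0) d = p.1 := by
      rw [← hp]
      funext i
      unfold shiftCtx
      refine Fin.cases ?_ ?_ i
      · simp
      · intro j
        simp [Fin.snoc_castSucc, Fin.tail]
    show v p.1 p.2 = v (shiftCtx (p.1 0) d) (d (Fin.last n))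
    rw [h1, h2]

open Classical in
/-- The family of constraint functionals. -/
noncomputable def Lfam {A : Type*} [Fintype A] {n m : ℕ}
    (G : Fin m → (Fin (n + 1) → A) → A → ℝ)
    (ustar : (Fin (n + 1) → A) → A → ℝ) :
    ((Unit ⊕ Fin m) ⊕ ((Fin (n + 1) → A) ⊕ ((Fin (n + 1) → A) × A))) →
      ((Fin (n + 1) → A) → A → ℝ) →ₗ[ℝ] ℝ
  | .inl (.inl _) => lfun fun _ _ => (1:ℝ)
  | .inl (.inr j) => lfun (G j)
  | .inr (.inl d) => lfun fun c a =>
      (if Fin.snoc (Fin.tail c) a = d then (1:ℝ) else 0) - (if c = d then 1 else 0)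
  | .inr (.inr p) => lfun fun c a =>
      if 0 < ustar p.1 p.2 then 0 else if c = p.1 then if a = p.2 then (1:ℝ) else 0 else 0

/-- Optimality (KKT) conditions.  If the feasible `u*` maximizes
`J` over the face of feasible laws vanishing off the support of `u*`, then
there are multipliers `λ`, `γ`, `ψ` such that on the support,
`log(u*(c,a)/η_{u*}(c)) = −γ − ∑_j λ_j G_j(c,a) − ψ(c) + ψ(σ(c,a))`, where
`σ(c,a) = (c₂,…,c_r,a)` is the length-`r` suffix. -/
theorem stmt10 {A : Type*} [Fintype A] [Nonempty A] {n m : ℕ}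
    (G : Fin m → (Fin (n + 1) → A) → A → ℝ) (b : Fin m → ℝ)
    (ustar : (Fin (n + 1) → A) → A → ℝ)
    (hfeas : Feasible G b ustar)
    (hmax : ∀ u, Feasible G b u → (∀ c a, ¬ 0 < ustar c a → u c a = 0) →
      J u ≤ J ustar) :
    ∃ (lam : Fin m → ℝ) (γ : ℝ) (ψ : (Fin (n + 1) → A) → ℝ),
      ∀ c a, 0 < ustar c a →
        Real.log (ustar c a / eta ustar c) =
          -γ - (∑ j, lam j * G j c a) - ψ c + ψ (Fin.snoc (Fin.tail c) a) := by
  classical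
  obtain ⟨⟨hpos, hmass⟩, hstat, hfeat⟩ := hfeas
  -- The gradient functional
  set Wg : (Fin (n + 1) → A) → A → ℝ :=
    fun c a => -Real.log (ustar c a / eta ustar c) with hWg
  have hker : (⨅ i, LinearMap.ker (Lfam G ustar i)) ≤ LinearMap.ker (lfun Wg) := by
    intro v hv
    simp only [Submodule.mem_iInf, LinearMap.mem_ker] at hv
    -- extract the constraint identities satisfied by v
    have hv0 : ∀ c a, ¬ 0 < ustar c a → v c a = 0 := by
      intro c a h
      have h1 := hv (.inr (.inr (c, a)))
      rw [show Lfam G ustar (.inr (.inr (c, a)))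
          = lfun (fun c' a' => if c' = c then if a' = a then (1:ℝ) else 0 else 0) by
        simp only [Lfam]
        congr 1
        funext c' a'
        rw [if_neg h]] at h1
      rw [lfun_delta_left] at h1
      exact h1
    have hvmass : ∑ c, ∑ a, v c a = 0 := by
      have h1 := hv (.inl (.inl ()))
      simpa [Lfam, lfun_apply] using h1
    have hvG : ∀ j, ∑ c, ∑ a, v c a * G j c a = 0 := by
      intro j
      have h1 := hv (.inl (.inr j))
      simp only [Lfam, lfun_apply] at h1
      simpa [mul_comm] using h1
    have hvstat : ∀ d, ∑ α : A, v (shiftCtx α d) (d (Fin.last n)) = ∑ β, v d β := by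
      intro d
      have h1 := hv (.inr (.inl d))
      simp only [Lfam, lfun_apply, sub_mul, Finset.sum_sub_distrib] at h1
      rw [stat_sum, sum_ite_ctx] at h1
      linarith
    -- the perturbed laws
    set e : (Fin (n + 1) → A) → ℝ := eta ustar with he_def
    set ww : (Fin (n + 1) → A) → ℝ := fun c => ∑ a, v c a with hww
    -- a radius within which perturbations stay nonnegative
    obtain ⟨p₀⟩ : Nonempty ((Fin (n + 1) → A) × A) := inferInstance
    set ε : ℝ := Finset.univ.inf' ⟨p₀, Finset.mem_univ p₀⟩
      (fun p : (Fin (n + 1) → A) × A =>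
        if 0 < ustar p.1 p.2 then ustar p.1 p.2 / (|v p.1 p.2| + 1) else 1) with hε_def
    have hε : 0 < ε := by
      rw [hε_def]; apply (Finset.lt_inf'_iff _).2
      intro p _
      split
      · next h => positivity
      · norm_num
    have hnn : ∀ t : ℝ, |t| < ε → ∀ c a, 0 ≤ ustar c a + t * v c a := by
      intro t ht c a
      by_cases h : 0 < ustar c a
      · have hle : ε ≤ ustar c a / (|v c a| + 1) := by
          have := Finset.inf'_le (b := ((c, a) : (Fin (n + 1) → A) × A))
            (fun p : (Fin (n + 1) → A) × A =>
              if 0 < ustar p.1 p.2 then ustar p.1 p.2 / (|v p.1 p.2| + 1) else 1)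
            (Finset.mem_univ _)
          rw [if_pos h] at this
          exact this
        have habs : 0 ≤ |v c a| := abs_nonneg _
        have h1 : ε * (|v c a| + 1) ≤ ustar c a := by
          rw [div_eq_mul_inv] at hle
          have := mul_le_mul_of_nonneg_right hle (by positivity : (0:ℝ) ≤ |v c a| + 1)
          rwa [mul_assoc, inv_mul_cancel₀ (by positivity : (|v c a| + 1) ≠ 0), mul_one] at this
        have h2 : -(|t| * |v c a|) ≤ t * v c a := by
          rw [← abs_mul]; exact neg_abs_le _
        have h3 : |t| * |v c a| ≤ ε * |v c a| := by
          apply mul_le_mul_of_nonneg_right ht.le habs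
        nlinarith
      · rw [hv0 c a h, le_antisymm (not_lt.1 h) (hpos c a)]
        simp
    -- feasibility of the perturbed laws
    have hfeast : ∀ t : ℝ, |t| < ε → Feasible G b (fun c a => ustar c a + t * v c a) := by
      intro t ht
      refine ⟨⟨hnn t ht, ?_⟩, ?_, ?_⟩
      · simp only [Finset.sum_add_distrib, ← Finset.mul_sum]
        rw [hmass, hvmass]
        ring
      · intro d
        simp only [Finset.sum_add_distrib, ← Finset.mul_sum]
        rw [hstat d, hvstat d]
      · intro j
        simp only [add_mul, Finset.sum_add_distrib, mul_assoc, ← Finset.mul_sum]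
        rw [hfeat j, hvG j]
        ring
    -- local maximality
    have hlocmax : IsLocalMax (fun t : ℝ => J (fun c a => ustar c a + t * v c a)) 0 := by
      have hball := Metric.ball_mem_nhds (0:ℝ) hε
      have h0 : J (fun c a => ustar c a + (0:ℝ) * v c a) = J ustar := by
        congr 1; funext c a; ring
      unfold IsLocalMax IsMaxFilter
      filter_upwards [hball] with t ht
      rw [Metric.mem_ball, Real.dist_eq, sub_zero] at ht
      rw [h0]
      refine hmax _ (hfeast t ht) fun c a h => ?_
      show ustar c a + t * v c a = 0
      rw [hv0 c a h, le_antisymm (not_lt.1 h) (hpos c a)]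
      ring
    -- the derivative
    have hec_all : ∀ c a, 0 < ustar c a → 0 < e c := by
      intro c a h
      have : ustar c a ≤ e c := Finset.single_le_sum (fun a' _ => hpos c a') (Finset.mem_univ a)
      linarith
    have hderiv : HasDerivAt (fun t : ℝ => J (fun c a => ustar c a + t * v c a))
        (-∑ c, ∑ a, (if 0 < ustar c a then
          v c a * Real.log (ustar c a / e c) + v c a - ustar c a * ww c / e c else 0)) 0 := by
      have hfun : (fun t : ℝ => J (fun c a => ustar c a + t * v c a))
          = fun t : ℝ => -∑ c, ∑ a, (ustar c a + t * v c a) *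
              Real.log ((ustar c a + t * v c a) / (e c + t * ww c)) := by
        funext t
        simp only [J]
        congr 1
        refine Finset.sum_congr rfl fun c _ => Finset.sum_congr rfl fun a _ => ?_
        have : eta (fun c a => ustar c a + t * v c a) c = e c + t * ww c := by
          simp [eta, Finset.sum_add_distrib, Finset.mul_sum, he_def, hww]
        rw [this]
      rw [hfun]
      refine HasDerivAt.neg ?_
      refine HasDerivAt.fun_sum fun c _ => ?_
      refine HasDerivAt.fun_sum fun a _ => ?_
      by_cases hca : 0 < ustar c a
      · rw [if_pos hca]
        exact hasDeriv_term (ustar c a) (v c a) (e c) (ww c) hca (hec_all c a hca)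
      · rw [if_neg hca]
        have hu0 : ustar c a = 0 := le_antisymm (not_lt.1 hca) (hpos c a)
        have hv0' : v c a = 0 := hv0 c a hca
        have : (fun t : ℝ => (ustar c a + t * v c a) *
            Real.log ((ustar c a + t * v c a) / (e c + t * ww c))) = fun _ => (0:ℝ) := by
          funext t; simp [hu0, hv0']
        rw [this]
        exact hasDerivAt_const 0 0
    have hDzero := hlocmax.hasDerivAt_eq_zero hderiv
    -- conclude : lfun Wg v = 0
    rw [LinearMap.mem_ker, lfun_apply]
    have hsum0 : ∑ c, ∑ a, (if 0 < ustar c a then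
        v c a * Real.log (ustar c a / e c) + v c a - ustar c a * ww c / e c else 0) = 0 := by
      linarith [hDzero]
    have hDD : ∀ c a, (if 0 < ustar c a then
        v c a * Real.log (ustar c a / e c) + v c a - ustar c a * ww c / e c else 0)
        = v c a * Real.log (ustar c a / e c) + (v c a - ustar c a * (ww c / e c)) := by
      intro c a
      by_cases h : 0 < ustar c a
      · rw [if_pos h]; ring
      · rw [if_neg h]
        have hu0 : ustar c a = 0 := le_antisymm (not_lt.1 h) (hpos c a)
        simp [hu0, hv0 c a h]
    have hcc : ∀ c, ∑ a, (v c a * Real.log (ustar c a / e c)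
          + (v c a - ustar c a * (ww c / e c))) = ∑ a, v c a * Real.log (ustar c a / e c) := by
      intro c
      rw [Finset.sum_add_distrib, Finset.sum_sub_distrib, ← Finset.sum_mul]
      by_cases hc : e c = 0
      · have hall : ∀ a, ustar c a = 0 := by
          intro a
          have h1 : ∑ a, ustar c a = 0 := hc
          have := (Finset.sum_eq_zero_iff_of_nonneg (fun a _ => hpos c a)).1 h1
          exact this a (Finset.mem_univ a)
        have hvall : ∀ a, v c a = 0 := fun a => hv0 c a (by rw [hall a]; simp)
        simp [hvall, hc]
      · have h1 : (∑ a, ustar c a) = e c := rfl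
        have h2 : (∑ a, v c a) = ww c := rfl
        rw [h1, h2, mul_div_assoc', mul_div_cancel_left₀ _ hc]
        ring
    calc ∑ c, ∑ a, Wg c a * v c a
        = -∑ c, ∑ a, v c a * Real.log (ustar c a / e c) := by
          rw [← Finset.sum_neg_distrib]
          refine Finset.sum_congr rfl fun c _ => ?_
          rw [← Finset.sum_neg_distrib]
          refine Finset.sum_congr rfl fun a _ => ?_
          simp only [hWg, he_def]
          ring
      _ = -∑ c, ∑ a, (v c a * Real.log (ustar c a / e c)
            + (v c a - ustar c a * (ww c / e c))) := by
          rw [neg_inj]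
          exact (Finset.sum_congr rfl fun c _ => (hcc c)).symm
      _ = 0 := by
          rw [neg_eq_zero, ← hsum0]
          exact Finset.sum_congr rfl fun c _ => Finset.sum_congr rfl fun a _ => (hDD c a).symm
  -- Lagrange multipliers
  have hspan := mem_span_of_iInf_ker_le_ker hker
  obtain ⟨coef, hcoef⟩ := (Submodule.mem_span_range_iff_exists_fun ℝ).1 hspan
  refine ⟨fun j => coef (.inl (.inr j)), coef (.inl (.inl ())),
    fun d => -coef (.inr (.inl d)), ?_⟩
  intro c a hca
  have hev := congrArg (fun T : ((Fin (n + 1) → A) → A → ℝ) →ₗ[ℝ] ℝ =>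
    T (fun c' a' => if c' = c then if a' = a then (1:ℝ) else 0 else 0)) hcoef
  simp only [LinearMap.coe_sum, Finset.sum_apply, LinearMap.smul_apply, smul_eq_mul] at hev
  rw [lfun_delta] at hev
  rw [Fintype.sum_sum_type, Fintype.sum_sum_type, Fintype.sum_sum_type] at hev
  simp only [Lfam, lfun_delta] at hev
  -- evaluate the four blocks
  have hunit : ∑ x : Unit, coef (.inl (.inl x)) * 1 = coef (.inl (.inl ())) := by simp
  have hWd : ∑ d : Fin (n + 1) → A, coef (.inr (.inl d)) *
      ((if Fin.snoc (Fin.tail c) a = d then (1:ℝ) else 0) - (if c = d then 1 else 0))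
      = coef (.inr (.inl (Fin.snoc (Fin.tail c) a))) - coef (.inr (.inl c)) := by
    simp only [mul_sub, Finset.sum_sub_distrib, mul_ite, mul_one, mul_zero]
    rw [Finset.sum_ite_eq, Finset.sum_ite_eq]
    simp
  have hWoff : ∑ p : (Fin (n + 1) → A) × A, coef (.inr (.inr p)) *
      (if 0 < ustar p.1 p.2 then 0 else if c = p.1 then if a = p.2 then (1:ℝ) else 0 else 0)
      = 0 := by
    refine Finset.sum_eq_zero fun p _ => ?_
    by_cases hp : 0 < ustar p.1 p.2
    · rw [if_pos hp]; ring
    · rw [if_neg hp]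
      by_cases h1 : c = p.1
      · by_cases h2 : a = p.2
        · exfalso; apply hp; rw [← h1, ← h2]; exact hca
        · rw [if_pos h1, if_neg h2]; ring
      · rw [if_neg h1]; ring
  rw [hunit, hWd, hWoff] at hev
  simp only [hWg] at hev
  have : Real.log (ustar c a / eta ustar c)
      = -coef (.inl (.inl ())) - (∑ j, coef (.inl (.inr j)) * G j c a)
        - coef (.inr (.inl (Fin.snoc (Fin.tail c) a))) + coef (.inr (.inl c)) := by
    linarith [hev]
  rw [this]
  ring
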